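/- The three rational rotation matrices [[1, 0, 0], [0, −3/5, −4/5], [0, 4/5, −3/5]], [[−3/5, 0, 4/5], [0, 1, 0], [−4/5, 0, −3/5]] and [[−3/5, −4/5, 0], [4/5, −3/5, 0], [0, 0, 1]] freely generate a free subgroup of rank 3 of SO₃(ℚ): the homomorphism from the free group on three generators to the group of invertible 3×3 rational matrices sending the generators to these three matrices is injective. -/

import Mathlib

namespace Free3

instance : Fact (Nat.Prime 5) := ⟨by norm_num⟩

abbrev Lt := Fin 3 × Bool

def U (p : Lt) : Fin 3 → ZMod 5 :=
  if p.2 then ![![0,1,2],![1,0,3],![1,2,0]] p.1 else ![![0,1,3],![1,0,2],![1,3,0]] p.1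

def V (p : Lt) : Fin 3 → ZMod 5 :=
  if p.2 then ![![0,2,1],![2,0,4],![2,1,0]] p.1 else ![![0,2,4],![2,0,1],![2,4,0]] p.1

def dot (a b : Fin 3 → ZMod 5) : ZMod 5 := a 0 * b 0 + a 1 * b 1 + a 2 * b 2

lemma hdot : ∀ p q : Lt, q ≠ (p.1, !p.2) → dot (V p) (U q) ≠ 0 := by decide

lemma hUVnz : ∀ p q : Lt, ∃ i j : Fin 3, U p i * V q j ≠ 0 := by decide

def Wm (p : Lt) : Matrix (Fin 3) (Fin 3) (ZMod 5) := Matrix.of fun i j => U p i * V p j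

def Npos : Fin 3 → Matrix (Fin 3) (Fin 3) ℤ :=
  ![!![5,0,0;0,-3,-4;0,4,-3], !![-3,0,4;0,5,0;-4,0,-3], !![-3,-4,0;4,-3,0;0,0,5]]

def N (p : Lt) : Matrix (Fin 3) (Fin 3) ℤ := if p.2 then Npos p.1 else (Npos p.1).transpose

lemma hN5 : ∀ p : Lt, (N p).map (Int.cast : ℤ → ZMod 5) = Wm p := by
  intro p
  obtain ⟨i, b⟩ := p
  ext r c
  fin_cases i <;> cases b <;> fin_cases r <;> fin_cases c <;>
    simp [N, Npos, Wm, U, V] <;> decide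

lemma key : ∀ (l : List Lt) (p : Lt), List.Chain (fun a b => b ≠ (a.1, !a.2)) p l →
    ∃ c : ZMod 5, c ≠ 0 ∧ ∃ q : Lt,
      ((p :: l).map Wm).prod = c • Matrix.of (fun i j => U p i * V q j) := by
  intro l
  induction l with
  | nil =>
    intro p _
    exact ⟨1, by decide, p, by simp [Wm]⟩
  | cons q t ih =>
    intro p h
    rcases List.chain_cons.mp h with ⟨hpq, hqt⟩
    obtain ⟨c, hc, q', hq'⟩ := ih q hqt
    refine ⟨dot (V p) (U q) * c, mul_ne_zero (hdot p q hpq) hc, q', ?_⟩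
    rw [List.map_cons, List.prod_cons, hq']
    ext i j
    simp only [Wm, Matrix.smul_apply, Matrix.mul_apply, Matrix.of_apply,
      Fin.sum_univ_three, smul_eq_mul]
    simp only [dot]
    ring

lemma chain'_of_red (l : List Lt)
    (h : ∀ (L₂ L₃ : List Lt) (x : Fin 3) (b : Bool), l ≠ L₂ ++ (x, b) :: (x, !b) :: L₃) :
    List.Chain' (fun a b : Lt => b ≠ (a.1, !a.2)) l := by
  induction l with
  | nil => exact List.isChain_nil
  | cons a t ih =>
    cases t with
    | nil => exact List.isChain_singleton _
    | cons b t' =>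
      show List.IsChain _ _
      rw [List.isChain_cons_cons]
      refine ⟨fun hb => h [] t' a.1 a.2 (by simp [hb]), ?_⟩
      exact ih fun L₂ L₃ x bb hh => h (a :: L₂) L₃ x bb (by rw [hh]; rfl)

def g (f : Fin 3 → GL (Fin 3) ℚ) (p : Lt) : Matrix (Fin 3) (Fin 3) ℚ :=
  ↑(cond p.2 (f p.1) (f p.1)⁻¹)

lemma hprod (f : Fin 3 → GL (Fin 3) ℚ)
    (hg : ∀ p : Lt, g f p = (5 : ℚ)⁻¹ • (N p).map (Int.cast : ℤ → ℚ)) :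
    ∀ l : List Lt,
      (l.map (g f)).prod = ((5 : ℚ) ^ l.length)⁻¹ • ((l.map N).prod).map (Int.cast : ℤ → ℚ) := by
  intro l
  induction l with
  | nil =>
    simp [Matrix.map_one (Int.cast : ℤ → ℚ) (by simp) (by simp)]
  | cons p t ih =>
    rw [List.map_cons, List.prod_cons, ih, hg p, List.map_cons, List.prod_cons]
    rw [smul_mul_smul_comm]
    have hmul : ((N p).map (Int.cast : ℤ → ℚ)) * (((t.map N).prod).map (Int.cast : ℤ → ℚ))
        = ((N p * (t.map N).prod).map (Int.cast : ℤ → ℚ)) := by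
      ext i j
      simp [Matrix.mul_apply, Matrix.map_apply, Fin.sum_univ_three]
    rw [hmul]
    congr 1
    rw [List.length_cons, pow_succ, mul_inv]
    ring

theorem main (f : Fin 3 → GL (Fin 3) ℚ)
    (hg : ∀ p : Lt, g f p = (5 : ℚ)⁻¹ • (N p).map (Int.cast : ℤ → ℚ)) :
    Function.Injective ⇑(FreeGroup.lift f) := by
  rw [injective_iff_map_eq_one]
  intro w hw
  by_contra hne
  have hlnil : w.toWord ≠ [] := fun h => hne (FreeGroup.toWord_eq_nil_iff.mp h)
  have hchain : List.Chain' (fun a b : Lt => b ≠ (a.1, !a.2)) w.toWord := by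
    refine chain'_of_red _ fun L₂ L₃ x b hh => ?_
    exact FreeGroup.reduce.not (L₂ := L₂) (L₃ := L₃)
      (by rw [FreeGroup.reduce_toWord]; exact hh)
  obtain ⟨p, t, hpt⟩ := List.exists_cons_of_ne_nil hlnil
  rw [hpt] at hchain
  obtain ⟨c, hc, q, hq⟩ := key t p hchain
  have hw' : (w.toWord.map (g f)).prod = 1 := by
    have h1 : FreeGroup.lift f (FreeGroup.mk w.toWord) = 1 := by
      rw [FreeGroup.mk_toWord]; exact hw
    rw [FreeGroup.lift_mk] at h1
    have h2 := congrArg (Units.coeHom (Matrix (Fin 3) (Fin 3) ℚ)) h1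
    rw [map_list_prod] at h2
    simp [List.map_map, g, Function.comp_def] at h2; exact h2
  rw [hprod f hg] at hw'
  set n := w.toWord.length with hn
  have hposn : 0 < n := by rw [hn, hpt]; simp
  have h5 : ((5 : ℚ) ^ n) ≠ 0 := by positivity
  have hZ : ((w.toWord.map N).prod).map (Int.cast : ℤ → ℚ) = (5 : ℚ) ^ n • 1 := by
    rw [← hw', smul_smul, mul_inv_cancel₀ h5, one_smul]
  have hint : (w.toWord.map N).prod = (5 : ℤ) ^ n • 1 := by
    ext i j
    apply @Int.cast_injective ℚ
    have h3 := congrFun (congrFun hZ i) j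
    simp only [Matrix.map_apply] at h3
    rw [h3]
    simp [Matrix.smul_apply, Matrix.one_apply, apply_ite (Int.cast : ℤ → ℚ)]
  have h5Z : ((w.toWord.map N).prod).map (Int.cast : ℤ → ZMod 5) = 0 := by
    rw [hint]
    ext i j
    simp only [Matrix.map_apply, Matrix.smul_apply, smul_eq_mul, Matrix.zero_apply]
    push_cast
    rw [show (5 : ZMod 5) = 0 by decide, zero_pow (by omega), zero_mul]
  have hWm : ((w.toWord.map N).prod).map (Int.cast : ℤ → ZMod 5) = (w.toWord.map Wm).prod := by
    have h := map_list_prod ((Int.castRingHom (ZMod 5)).mapMatrix) (w.toWord.map N)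
    simp only [RingHom.mapMatrix_apply, List.map_map] at h
    rw [Int.coe_castRingHom] at h
    rw [h]
    congr 1
    exact List.map_congr_left fun p _ => by
      simp only [Function.comp_apply, RingHom.mapMatrix_apply, Int.coe_castRingHom, hN5 p]
  rw [hWm, hpt, hq] at h5Z
  obtain ⟨i, j, hij⟩ := hUVnz p q
  have hentry := congrFun (congrFun h5Z i) j
  simp only [Matrix.smul_apply, Matrix.of_apply, smul_eq_mul, Matrix.zero_apply] at hentry
  exact (mul_ne_zero hc hij) hentry

end Free3

theorem three_rational_rotations_free :
    Function.Injective
      (FreeGroup.lift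
        (![Matrix.GeneralLinearGroup.mkOfDetNeZero
            (!![(1 : ℚ), 0, 0;
                (0 : ℚ), (-3 : ℚ)/5, (-4 : ℚ)/5;
                (0 : ℚ), (4 : ℚ)/5, (-3 : ℚ)/5])
            (by norm_num [Matrix.det_fin_three, Matrix.vecHead, Matrix.vecTail, Matrix.cons_val_two]),
           Matrix.GeneralLinearGroup.mkOfDetNeZero
            (!![(-3 : ℚ)/5, 0, 4/5;
                (0 : ℚ), 1, 0;
                (-4 : ℚ)/5, 0, (-3 : ℚ)/5])
            (by norm_num [Matrix.det_fin_three, Matrix.vecHead, Matrix.vecTail, Matrix.cons_val_two]),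
           Matrix.GeneralLinearGroup.mkOfDetNeZero
            (!![(-3 : ℚ)/5, (-4 : ℚ)/5, 0;
                (4 : ℚ)/5, (-3 : ℚ)/5, 0;
                (0 : ℚ), 0, 1])
            (by norm_num [Matrix.det_fin_three, Matrix.vecHead, Matrix.vecTail, Matrix.cons_val_two])] :
          Fin 3 → GL (Fin 3) ℚ)) := by
  apply Free3.main
  have coe_mk : ∀ (A : Matrix (Fin 3) (Fin 3) ℚ) (h : A.det ≠ 0),
      (↑(Matrix.GeneralLinearGroup.mkOfDetNeZero A h) : Matrix (Fin 3) (Fin 3) ℚ) = A :=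
    fun A h => rfl
  intro p
  obtain ⟨i, b⟩ := p
  cases b with
  | true =>
    fin_cases i <;>
    · ext r c
      fin_cases r <;> fin_cases c <;>
        norm_num [Free3.g, Free3.N, Free3.Npos, Matrix.smul_apply, Matrix.map_apply, coe_mk,
          Matrix.one_apply, Matrix.vecHead, Matrix.vecTail]
  | false =>
    fin_cases i <;>
    · simp only [Free3.g, cond]
      rw [Matrix.coe_units_inv]
      apply Matrix.inv_eq_right_inv
      ext r c
      fin_cases r <;> fin_cases c <;>
        norm_num [Free3.N, Free3.Npos, Matrix.mul_apply, Fin.sum_univ_three, coe_mk,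
          Matrix.smul_apply, Matrix.map_apply, Matrix.transpose_apply, Matrix.one_apply,
          Matrix.vecHead, Matrix.vecTail, Fin.ext_iff, Matrix.cons_val_two]
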